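/- Let n ≥ 1, let B ⊆ Fin n, let a : Fin n → Fin n → ℝ be a measurement matrix, and let g : Fin n → ℝ be nonzero with g_i = 0 for all i ∉ B and ∑_i g_i = 0. Then: (1) there exists u* with ∑_i g_i·u*_i = 1 minimizing I over M_g := { u : ∑_i g_i·u_i = 1 }; (2) there exists a Neumann dual feasible pair (b*, λ*) with I(u*) = λ*; and (3) for every u ∈ M_g and every Neumann dual feasible pair (b, λ), one has λ ≤ I(u). (Strong duality with attainment for the Neumann least gradient problem.) -/

import Mathlib

noncomputable def lgEnergy {n : ℕ} (a : Fin n → Fin n → ℝ) (u : Fin n → ℝ) : ℝ :=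
  (1 / 2) * ∑ i, ∑ j, a i j * |u i - u j|

noncomputable def dvg {n : ℕ} (b : Fin n → Fin n → ℝ) (i : Fin n) : ℝ :=
  ∑ j, (b j i - b i j)

section NeumannAux
variable {n : ℕ}

lemma lgEnergy_eq (a : Fin n → Fin n → ℝ) (u : Fin n → ℝ) :
    lgEnergy a u = ∑ i, ∑ j, (a i j / 2) * |u j - u i| := by
  unfold lgEnergy
  rw [Finset.mul_sum]
  refine Finset.sum_congr rfl fun i _ => ?_
  rw [Finset.mul_sum]
  refine Finset.sum_congr rfl fun j _ => ?_
  rw [abs_sub_comm]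
  ring

lemma dvg_sum_mul (b : Fin n → Fin n → ℝ) (u : Fin n → ℝ) :
    ∑ i, dvg b i * u i = ∑ i, ∑ j, b i j * (u j - u i) := by
  unfold dvg
  simp only [Finset.sum_mul, sub_mul, mul_sub, Finset.sum_sub_distrib]
  congr 1
  exact Finset.sum_comm

lemma dvg_weak (a : Fin n → Fin n → ℝ) (b : Fin n → Fin n → ℝ) (u : Fin n → ℝ)
    (hb : ∀ i j, |b i j| ≤ a i j / 2) :
    ∑ i, dvg b i * u i ≤ lgEnergy a u := by
  rw [dvg_sum_mul, lgEnergy_eq]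
  refine Finset.sum_le_sum fun i _ => Finset.sum_le_sum fun j _ => ?_
  calc b i j * (u j - u i) ≤ |b i j * (u j - u i)| := le_abs_self _
    _ = |b i j| * |u j - u i| := abs_mul _ _
    _ ≤ (a i j / 2) * |u j - u i| :=
        mul_le_mul_of_nonneg_right (hb i j) (abs_nonneg _)

lemma dvg_attain (a : Fin n → Fin n → ℝ) (hanonneg : ∀ i j, 0 ≤ a i j) (u : Fin n → ℝ) :
    ∃ b : Fin n → Fin n → ℝ, (∀ i j, |b i j| ≤ a i j / 2) ∧
      ∑ i, dvg b i * u i = lgEnergy a u := by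
  refine ⟨fun i j => if 0 ≤ u j - u i then a i j / 2 else -(a i j / 2), fun i j => ?_, ?_⟩
  · have h2 : 0 ≤ a i j / 2 := by linarith [hanonneg i j]
    by_cases h : 0 ≤ u j - u i <;> simp [h, abs_of_nonneg h2]
  · rw [dvg_sum_mul, lgEnergy_eq]
    refine Finset.sum_congr rfl fun i _ => Finset.sum_congr rfl fun j _ => ?_
    by_cases h : 0 ≤ u j - u i
    · rw [if_pos h, abs_of_nonneg h]
    · rw [if_neg h, abs_of_neg (not_le.1 h)]; ring

lemma lgEnergy_nonneg (a : Fin n → Fin n → ℝ) (hanonneg : ∀ i j, 0 ≤ a i j) (u : Fin n → ℝ) :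
    0 ≤ lgEnergy a u := by
  unfold lgEnergy
  have : (0:ℝ) ≤ ∑ i, ∑ j, a i j * |u i - u j| :=
    Finset.sum_nonneg fun i _ => Finset.sum_nonneg fun j _ =>
      mul_nonneg (hanonneg i j) (abs_nonneg _)
  linarith

lemma lgEnergy_add_le (a : Fin n → Fin n → ℝ) (hanonneg : ∀ i j, 0 ≤ a i j)
    (u v : Fin n → ℝ) : lgEnergy a (u + v) ≤ lgEnergy a u + lgEnergy a v := by
  unfold lgEnergy
  rw [← mul_add, ← Finset.sum_add_distrib]
  have key : ∀ i ∈ Finset.univ, ∑ j, a i j * |(u+v) i - (u+v) j|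
      ≤ ∑ j, (a i j * |u i - u j| + a i j * |v i - v j|) := by
    intro i _
    refine Finset.sum_le_sum fun j _ => ?_
    rw [← mul_add]
    refine mul_le_mul_of_nonneg_left ?_ (hanonneg i j)
    have h : (u+v) i - (u+v) j = (u i - u j) + (v i - v j) := by simp; ring
    rw [h]; exact abs_add_le _ _
  have h := Finset.sum_le_sum key
  simp only [Finset.sum_add_distrib] at h ⊢
  linarith

lemma lgEnergy_smul (a : Fin n → Fin n → ℝ) (c : ℝ) (u : Fin n → ℝ) :
    lgEnergy a (c • u) = |c| * lgEnergy a u := by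
  unfold lgEnergy
  have h : ∀ i j : Fin n, a i j * |(c • u) i - (c • u) j| = |c| * (a i j * |u i - u j|) := by
    intro i j
    have : (c • u) i - (c • u) j = c * (u i - u j) := by simp; ring
    rw [this, abs_mul]; ring
  simp only [h, ← Finset.mul_sum]
  ring

lemma lgEnergy_zero (a : Fin n → Fin n → ℝ) : lgEnergy a 0 = 0 := by
  simp [lgEnergy]

lemma lgEnergy_continuous (a : Fin n → Fin n → ℝ) : Continuous (lgEnergy a) := by
  unfold lgEnergy
  refine continuous_const.mul ?_
  refine continuous_finset_sum _ fun i _ => continuous_finset_sum _ fun j _ => ?_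
  exact continuous_const.mul ((continuous_apply i).sub (continuous_apply j)).abs

lemma dvg_continuous : Continuous (dvg : (Fin n → Fin n → ℝ) → (Fin n → ℝ)) := by
  refine continuous_pi fun i => continuous_finset_sum _ fun j _ => ?_
  exact (continuous_apply_apply j i).sub
    (continuous_apply_apply i j)

lemma isCompact_D (a : Fin n → Fin n → ℝ) :
    IsCompact {d : Fin n → ℝ | ∃ b : Fin n → Fin n → ℝ,
      (∀ i j, |b i j| ≤ a i j / 2) ∧ dvg b = d} := by
  have hK : IsCompact (Set.univ.pi fun i : Fin n =>
      Set.univ.pi fun j : Fin n => Set.Icc (-(a i j / 2)) (a i j / 2)) :=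
    isCompact_univ_pi fun i => isCompact_univ_pi fun j => isCompact_Icc
  have him := hK.image dvg_continuous
  convert him using 1
  ext d
  constructor
  · rintro ⟨b, hb, rfl⟩
    exact ⟨b, fun i _ => fun j _ => abs_le.1 (hb i j), rfl⟩
  · rintro ⟨b, hb, rfl⟩
    exact ⟨b, fun i j => abs_le.2 (hb i (Set.mem_univ i) j (Set.mem_univ j)), rfl⟩

lemma clm_repr (f : (Fin n → ℝ) →L[ℝ] ℝ) (x : Fin n → ℝ) :
    f x = ∑ i, x i * f (fun j => if i = j then 1 else 0) := by
  conv_lhs => rw [pi_eq_sum_univ x]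
  rw [map_sum]
  refine Finset.sum_congr rfl fun i _ => ?_
  rw [map_smul, smul_eq_mul]

end NeumannAux

/-- Strong duality with attainment for the Neumann least gradient problem. -/
theorem neumann_strong_duality
    (n : ℕ) (hn : 1 ≤ n) (B : Finset (Fin n))
    (a : Fin n → Fin n → ℝ)
    (hasymm : ∀ i j, a i j = a j i) (hanonneg : ∀ i j, 0 ≤ a i j)
    (hadiag : ∀ i, a i i = 0)
    (g : Fin n → ℝ) (hgne : g ≠ 0) (hgB : ∀ i, i ∉ B → g i = 0)
    (hgsum : ∑ i, g i = 0) :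
    ∃ ustar : Fin n → ℝ,
      (∑ i, g i * ustar i = 1) ∧
      (∀ u : Fin n → ℝ, ∑ i, g i * u i = 1 → lgEnergy a ustar ≤ lgEnergy a u) ∧
      (∃ bstar : Fin n → Fin n → ℝ, ∃ lamstar : ℝ,
        (∀ i j, |bstar i j| ≤ a i j / 2) ∧
        (∀ i, dvg bstar i = lamstar * g i) ∧
        lgEnergy a ustar = lamstar) ∧
      (∀ u : Fin n → ℝ, ∑ i, g i * u i = 1 →
        ∀ (b : Fin n → Fin n → ℝ) (lam : ℝ),
          (∀ i j, |b i j| ≤ a i j / 2) → (∀ i, dvg b i = lam * g i) →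
          lam ≤ lgEnergy a u) := by
  classical
  -- weak duality
  have weak : ∀ u : Fin n → ℝ, ∑ i, g i * u i = 1 →
      ∀ (b : Fin n → Fin n → ℝ) (lam : ℝ), (∀ i j, |b i j| ≤ a i j / 2) →
      (∀ i, dvg b i = lam * g i) → lam ≤ lgEnergy a u := by
    intro u hu b lam hb hdiv
    have h1 : lam = ∑ i, dvg b i * u i := by
      simp only [hdiv]
      have : ∑ i, lam * g i * u i = lam * ∑ i, g i * u i := by
        rw [Finset.mul_sum]
        exact Finset.sum_congr rfl fun i _ => (mul_assoc _ _ _)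
      rw [this, hu, mul_one]
    rw [h1]; exact dvg_weak a b u hb
  -- some index with g i0 ≠ 0
  have hex : ∃ i0, g i0 ≠ 0 := by
    by_contra h; push_neg at h; exact hgne (funext h)
  obtain ⟨i0, hi0⟩ := hex
  -- base feasible point
  set u0 : Fin n → ℝ := fun j => if j = i0 then (g i0)⁻¹ else 0 with hu0def
  have hu0f : ∑ i, g i * u0 i = 1 := by
    rw [Finset.sum_eq_single i0]
    · simp [hu0def, mul_inv_cancel₀ hi0]
    · intro b _ hb; simp [hu0def, hb]
    · intro h; exact absurd (Finset.mem_univ i0) h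
  -- the dual polytope
  set D : Set (Fin n → ℝ) := {d | ∃ b : Fin n → Fin n → ℝ,
    (∀ i j, |b i j| ≤ a i j / 2) ∧ dvg b = d} with hDdef
  have hDcomp : IsCompact D := isCompact_D a
  have hDconv : Convex ℝ D := by
    rintro d1 ⟨b1, hb1, rfl⟩ d2 ⟨b2, hb2, rfl⟩ p q hp hq hpq
    refine ⟨p • b1 + q • b2, fun i j => ?_, ?_⟩
    · calc |(p • b1 + q • b2) i j| = |p * b1 i j + q * b2 i j| := by
            simp [Pi.add_apply, Pi.smul_apply, smul_eq_mul]
        _ ≤ |p * b1 i j| + |q * b2 i j| := abs_add_le _ _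
        _ = p * |b1 i j| + q * |b2 i j| := by
            rw [abs_mul, abs_mul, abs_of_nonneg hp, abs_of_nonneg hq]
        _ ≤ p * (a i j / 2) + q * (a i j / 2) :=
            add_le_add (mul_le_mul_of_nonneg_left (hb1 i j) hp)
              (mul_le_mul_of_nonneg_left (hb2 i j) hq)
        _ = a i j / 2 := by rw [← add_mul, hpq, one_mul]
    · funext i
      simp only [dvg, Pi.add_apply, Pi.smul_apply, smul_eq_mul, Finset.mul_sum]
      rw [← Finset.sum_add_distrib]
      exact Finset.sum_congr rfl fun j _ => by ring
  have hD0 : (0 : Fin n → ℝ) ∈ D := by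
    refine ⟨0, fun i j => ?_, ?_⟩
    · simp only [Pi.zero_apply, abs_zero]
      linarith [hanonneg i j]
    · funext i; simp [dvg]
  -- the dual feasible multipliers
  set L : Set ℝ := {l | l • g ∈ D} with hLdef
  have hL0 : (0:ℝ) ∈ L := by
    show (0:ℝ) • g ∈ D
    rw [zero_smul]; exact hD0
  have hLclosed : IsClosed L :=
    hDcomp.isClosed.preimage (continuous_id.smul continuous_const)
  -- boundedness of L
  obtain ⟨d0, hd0D, hd0max'⟩ := hDcomp.exists_isMaxOn ⟨0, hD0⟩
    ((continuous_apply i0).abs.continuousOn)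
  have hd0max : ∀ d ∈ D, |d i0| ≤ |d0 i0| := fun d hd => hd0max' hd
  have hLbdd : L ⊆ Metric.closedBall 0 (|d0 i0| / |g i0|) := by
    intro l hl
    have h1 : |(l • g) i0| ≤ |d0 i0| := hd0max _ hl
    have h2 : |(l • g) i0| = |l| * |g i0| := by
      simp [Pi.smul_apply, smul_eq_mul, abs_mul]
    rw [Metric.mem_closedBall, dist_zero_right, Real.norm_eq_abs]
    rw [h2] at h1
    rw [le_div_iff₀ (abs_pos.2 hi0)]
    exact h1
  have hLcomp : IsCompact L :=
    (isCompact_closedBall 0 _).of_isClosed_subset hLclosed hLbdd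
  obtain ⟨lamstar, hlamL, hlamUB⟩ := hLcomp.exists_isGreatest ⟨0, hL0⟩
  obtain ⟨bstar, hbstar, hdvgstar⟩ := hlamL
  have hlam0 : 0 ≤ lamstar := hlamUB hL0
  -- existence of a minimizer
  obtain ⟨ustar, hufeas, humin⟩ : ∃ u : Fin n → ℝ, (∑ i, g i * u i = 1) ∧
      ∀ u' : Fin n → ℝ, (∑ i, g i * u' i = 1) → lgEnergy a u ≤ lgEnergy a u' := by
    by_cases hA : ∃ v, lgEnergy a v = 0 ∧ ∑ i, g i * v i ≠ 0
    · obtain ⟨v, hv0, hvs⟩ := hA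
      refine ⟨(∑ i, g i * v i)⁻¹ • v, ?_, ?_⟩
      · have : ∀ i, g i * ((∑ k, g k * v k)⁻¹ • v) i
            = (∑ k, g k * v k)⁻¹ * (g i * v i) := by
          intro i; simp [Pi.smul_apply, smul_eq_mul]; ring
        rw [Finset.sum_congr rfl fun i _ => this i, ← Finset.mul_sum,
          inv_mul_cancel₀ hvs]
      · intro u' _
        rw [lgEnergy_smul, hv0, mul_zero]
        exact lgEnergy_nonneg a hanonneg u'
    · push_neg at hA
      -- kernel of the seminorm
      set N : Submodule ℝ (Fin n → ℝ) :=
        { carrier := {v | lgEnergy a v = 0}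
          add_mem' := by
            intro x y hx hy
            refine le_antisymm ?_ (lgEnergy_nonneg a hanonneg _)
            calc lgEnergy a (x + y) ≤ lgEnergy a x + lgEnergy a y :=
                lgEnergy_add_le a hanonneg x y
              _ = 0 := by
                  rw [Set.mem_setOf_eq] at hx hy
                  rw [hx, hy, add_zero]
          zero_mem' := lgEnergy_zero a
          smul_mem' := by
            intro c x hx
            show lgEnergy a (c • x) = 0
            rw [Set.mem_setOf_eq] at hx
            rw [lgEnergy_smul, hx, mul_zero] } with hNdef
      have hNmem : ∀ v, v ∈ N ↔ lgEnergy a v = 0 := fun v => Iff.rfl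
      obtain ⟨W, hW⟩ := N.exists_isCompl
      have hdecomp : ∀ u : Fin n → ℝ, ∃ w ∈ W,
          lgEnergy a w = lgEnergy a u ∧ ∑ i, g i * w i = ∑ i, g i * u i := by
        intro u
        have hu : u ∈ N ⊔ W := by rw [hW.sup_eq_top]; trivial
        obtain ⟨v, hv, w, hw, hvw⟩ := Submodule.mem_sup.1 hu
        have hv0 : lgEnergy a v = 0 := hv
        have hnegv : lgEnergy a (-v) = 0 := by
          have h := lgEnergy_smul a (-1) v
          rw [neg_smul, one_smul] at h
          rw [h, hv0, mul_zero]
        refine ⟨w, hw, le_antisymm ?_ ?_, ?_⟩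
        · calc lgEnergy a w = lgEnergy a (-v + u) := by
                rw [← hvw]; congr 1; abel
            _ ≤ lgEnergy a (-v) + lgEnergy a u := lgEnergy_add_le a hanonneg _ _
            _ = lgEnergy a u := by rw [hnegv, zero_add]
        · calc lgEnergy a u = lgEnergy a (v + w) := by rw [hvw]
            _ ≤ lgEnergy a v + lgEnergy a w := lgEnergy_add_le a hanonneg _ _
            _ = lgEnergy a w := by rw [hv0, zero_add]
        · have hvs : ∑ i, g i * v i = 0 := hA v hv0
          rw [← hvw]
          simp only [Pi.add_apply, mul_add, Finset.sum_add_distrib, hvs, zero_add]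
      obtain ⟨w0, hw0W, hw0I, hw0s⟩ := hdecomp u0
      rw [hu0f] at hw0s
      have hw0ne : w0 ≠ 0 := by
        intro h; rw [h] at hw0s; simp at hw0s
      -- coercivity constant
      set S : Set (Fin n → ℝ) := (W : Set (Fin n → ℝ)) ∩ Metric.sphere 0 1 with hSdef
      have hScomp : IsCompact S :=
        (isCompact_sphere (0 : Fin n → ℝ) 1).inter_left W.closed_of_finiteDimensional
      have hw0norm : (0:ℝ) < ‖w0‖ := norm_pos_iff.2 hw0ne
      have hSne : S.Nonempty := by
        refine ⟨‖w0‖⁻¹ • w0, W.smul_mem _ hw0W, ?_⟩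
        simp [norm_smul, abs_of_nonneg (inv_nonneg.2 hw0norm.le),
          inv_mul_cancel₀ hw0norm.ne']
      obtain ⟨what, hwhatS, hmS'⟩ :=
        hScomp.exists_isMinOn hSne (lgEnergy_continuous a).continuousOn
      have hmS : ∀ w ∈ S, lgEnergy a what ≤ lgEnergy a w := fun w hw => hmS' hw
      set m := lgEnergy a what with hmdef
      have hm0 : 0 < m := by
        rcases (lgEnergy_nonneg a hanonneg what).lt_or_eq with h | h
        · exact h
        · exfalso
          have hwhat0 : what = 0 :=
            Submodule.disjoint_def.1 hW.disjoint what h.symm hwhatS.1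
          have := hwhatS.2
          rw [hwhat0] at this
          simp at this
      have hcoer : ∀ w ∈ W, m * ‖w‖ ≤ lgEnergy a w := by
        intro w hw
        rcases eq_or_ne w 0 with rfl | hne
        · simp [lgEnergy_zero]
        · have hwn : (0:ℝ) < ‖w‖ := norm_pos_iff.2 hne
          have hmem : ‖w‖⁻¹ • w ∈ S := by
            refine ⟨W.smul_mem _ hw, ?_⟩
            simp [norm_smul, abs_of_nonneg (inv_nonneg.2 hwn.le),
              inv_mul_cancel₀ hwn.ne']
          have h := hmS _ hmem
          rw [lgEnergy_smul, abs_of_nonneg (inv_nonneg.2 hwn.le)] at h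
          calc m * ‖w‖ ≤ (‖w‖⁻¹ * lgEnergy a w) * ‖w‖ :=
              mul_le_mul_of_nonneg_right h hwn.le
            _ = lgEnergy a w := by field_simp
      -- compact minimization
      set R := lgEnergy a w0 / m with hRdef
      set C : Set (Fin n → ℝ) :=
        ((W : Set (Fin n → ℝ)) ∩ {w | ∑ i, g i * w i = 1}) ∩ Metric.closedBall 0 R
        with hCdef
      have hCclosed : IsClosed ((W : Set (Fin n → ℝ)) ∩ {w | ∑ i, g i * w i = 1}) :=
        W.closed_of_finiteDimensional.inter
          (isClosed_eq (continuous_finset_sum _ fun i _ =>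
            continuous_const.mul (continuous_apply i)) continuous_const)
      have hCcomp : IsCompact C := (isCompact_closedBall (0:Fin n → ℝ) R).inter_left hCclosed
      have hw0C : w0 ∈ C := by
        refine ⟨⟨hw0W, hw0s⟩, ?_⟩
        rw [Metric.mem_closedBall, dist_zero_right]
        have := hcoer w0 hw0W
        rw [hRdef, le_div_iff₀ hm0]
        linarith
      obtain ⟨wstar, hwstarC, hminC'⟩ :=
        hCcomp.exists_isMinOn ⟨w0, hw0C⟩ (lgEnergy_continuous a).continuousOn
      have hminC : ∀ w ∈ C, lgEnergy a wstar ≤ lgEnergy a w := fun w hw => hminC' hw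
      refine ⟨wstar, hwstarC.1.2, ?_⟩
      intro u hu
      obtain ⟨w, hwW, hwI, hws⟩ := hdecomp u
      rw [hu] at hws
      rw [← hwI]
      rcases le_or_gt (lgEnergy a w) (lgEnergy a w0) with h | h
      · have hwC : w ∈ C := by
          refine ⟨⟨hwW, hws⟩, ?_⟩
          rw [Metric.mem_closedBall, dist_zero_right]
          have h2 := hcoer w hwW
          rw [hRdef, le_div_iff₀ hm0]
          linarith
        exact hminC w hwC
      · exact (hminC w0 hw0C).trans h.le
  -- strong duality
  have hdvgstar' : ∀ i, dvg bstar i = lamstar * g i := by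
    intro i
    have := congrFun hdvgstar i
    simpa using this
  have hstrong : lgEnergy a ustar ≤ lamstar := by
    by_contra hlt
    push_neg at hlt
    set μ := (lamstar + lgEnergy a ustar) / 2 with hμdef
    have hμ1 : lamstar < μ := by simp only [hμdef]; linarith
    have hμ2 : μ < lgEnergy a ustar := by simp only [hμdef]; linarith
    have hnot : μ • g ∉ D := fun hmem => absurd (hlamUB hmem) (not_le.2 hμ1)
    obtain ⟨f, s, hfd, hfx⟩ :=
      geometric_hahn_banach_closed_point hDconv hDcomp.isClosed hnot
    have hfg : 0 < f g := by
      have h1 : f (lamstar • g) < s := hfd _ ⟨bstar, hbstar, hdvgstar⟩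
      have h2 : s < f (μ • g) := hfx
      rw [map_smul, smul_eq_mul] at h1 h2
      nlinarith
    set e : Fin n → ℝ := fun i => f (fun j => if i = j then 1 else 0) with hedef
    have hrepr : ∀ x : Fin n → ℝ, f x = ∑ i, x i * e i := fun x => clm_repr f x
    set uh : Fin n → ℝ := (f g)⁻¹ • e with huhdef
    have huhfeas : ∑ i, g i * uh i = 1 := by
      have h : ∀ i, g i * uh i = (f g)⁻¹ * (g i * e i) := by
        intro i; simp [huhdef, Pi.smul_apply, smul_eq_mul]; ring
      rw [Finset.sum_congr rfl fun i _ => h i, ← Finset.mul_sum, ← hrepr g,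
        inv_mul_cancel₀ hfg.ne']
    obtain ⟨bh, hbh, hbattain⟩ := dvg_attain a hanonneg uh
    have h3 : f (dvg bh) < s := hfd _ ⟨bh, hbh, rfl⟩
    have h4 : lgEnergy a uh < μ := by
      rw [← hbattain]
      have h : ∀ i, dvg bh i * uh i = (f g)⁻¹ * (dvg bh i * e i) := by
        intro i; simp [huhdef, Pi.smul_apply, smul_eq_mul]; ring
      rw [Finset.sum_congr rfl fun i _ => h i, ← Finset.mul_sum, ← hrepr (dvg bh)]
      have h5 : s < μ * f g := by
        have := hfx; rw [map_smul, smul_eq_mul] at this; exact this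
      have h6 : f (dvg bh) < μ * f g := h3.trans h5
      calc (f g)⁻¹ * f (dvg bh) < (f g)⁻¹ * (μ * f g) :=
          mul_lt_mul_of_pos_left h6 (inv_pos.2 hfg)
        _ = μ := by field_simp
    have := humin uh huhfeas
    linarith
  have hweakstar : lamstar ≤ lgEnergy a ustar :=
    weak ustar hufeas bstar lamstar hbstar hdvgstar'
  exact ⟨ustar, hufeas, humin,
    ⟨bstar, lamstar, hbstar, hdvgstar', le_antisymm hstrong hweakstar⟩, weak⟩
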